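/- On every bounded set {‖φ‖ ≤ K} ⊂ D^{1,2}, the barycenter functional Bar(φ) = B₂(φ)/B₁(φ), where B₁(φ) = ∫_ℝ (1+(r_0+φ)²)^{-2} and B₂(φ) = ∫_ℝ s(1+(r_0+φ)²)^{-2}, is Lipschitz continuous: there exists L > 0 with |Bar(φ*) − Bar(φ)| ≤ L ‖φ* − φ‖_{D^{1,2}} for all ‖φ‖, ‖φ*‖ ≤ K. -/

import Mathlib

open MeasureTheory

/-- `φ` belongs to the space `D^{1,2}`, with weak derivative `v ∈ L²(ℝ)`. -/
def IsD12 (φ v : ℝ → ℝ) : Prop :=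
  Continuous φ ∧ MeasureTheory.MemLp v 2 MeasureTheory.volume ∧
    ∀ s : ℝ, φ s = φ 0 + ∫ t in (0 : ℝ)..s, v t

/-- The `D^{1,2}` norm of `φ` with weak derivative `v`. -/
noncomputable def D12norm (φ v : ℝ → ℝ) : ℝ :=
  Real.sqrt ((φ 0) ^ 2 + ∫ t : ℝ, (v t) ^ 2)

/-- The barycenter functional `Bar = B₂/B₁`. -/
noncomputable def Bar (r0 φ : ℝ → ℝ) : ℝ :=
  (∫ s : ℝ, s * ((1 + (r0 s + φ s) ^ 2) ^ 2)⁻¹) /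
    ∫ s : ℝ, ((1 + (r0 s + φ s) ^ 2) ^ 2)⁻¹

open Real Set

lemma integrable_japanese {r : ℝ} (hr : 1 < r) :
    Integrable fun s : ℝ => ((1 + |s|) ^ r)⁻¹ := by
  have h := integrable_one_add_norm (E := ℝ) (μ := volume) (r := r) (by simpa using hr)
  refine h.congr (Filter.Eventually.of_forall fun s => ?_)
  simp only [Real.norm_eq_abs]
  rw [Real.rpow_neg (by positivity)]

lemma cs_bound (v : ℝ → ℝ) (hv : MemLp v 2 volume) (s : ℝ) :
    |∫ t in (0:ℝ)..s, v t| ≤ Real.sqrt |s| * Real.sqrt (∫ t : ℝ, (v t)^2) := by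
  have hsq : Integrable (fun t => (v t)^2) volume := hv.integrable_sq
  have hμ : volume (Set.uIoc (0:ℝ) s) = ENNReal.ofReal |s| := by
    rcases le_total 0 s with h | h
    · rw [Set.uIoc_of_le h, Real.volume_Ioc, abs_of_nonneg h, sub_zero]
    · rw [Set.uIoc_of_ge h, Real.volume_Ioc, abs_of_nonpos h, zero_sub]
  haveI : IsFiniteMeasure (volume.restrict (Set.uIoc (0:ℝ) s)) := by
    constructor
    rw [Measure.restrict_apply_univ, hμ]
    exact ENNReal.ofReal_lt_top
  set μ := volume.restrict (Set.uIoc (0:ℝ) s) with hμdef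
  have h1 : |∫ t in (0:ℝ)..s, v t| ≤ ∫ t in Set.uIoc (0:ℝ) s, |v t| := by
    simpa using intervalIntegral.norm_integral_le_integral_norm_uIoc (f := v) (a := 0) (b := s)
  have h2 : ∫ t in Set.uIoc (0:ℝ) s, |v t| = ∫ t, 1 * |v t| ∂μ := by
    simp [hμdef]
  have hconj : Real.HolderConjugate 2 2 := by constructor <;> norm_num
  have hf1 : MemLp (fun _ : ℝ => (1:ℝ)) (ENNReal.ofReal 2) μ := by
    simpa using memLp_const (μ := μ) (1:ℝ) (p := ENNReal.ofReal 2)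
  have hfv : MemLp (fun t => |v t|) (ENNReal.ofReal 2) μ := by
    have : MemLp v 2 μ := hv.restrict _
    have := this.abs
    simpa [ENNReal.ofReal_ofNat, Pi.abs_def] using this
  have h3 := integral_mul_le_Lp_mul_Lq_of_nonneg hconj
    (Filter.Eventually.of_forall fun _ => zero_le_one)
    (Filter.Eventually.of_forall fun t => abs_nonneg (v t)) hf1 hfv
  have h4 : (∫ _t : ℝ, (1:ℝ)^(2:ℝ) ∂μ) = |s| := by
    simp [hμdef, hμ, measureReal_def, ENNReal.toReal_ofReal (abs_nonneg s)]
  have h5 : (∫ t : ℝ, |v t| ^ (2:ℝ) ∂μ) ≤ ∫ t : ℝ, (v t)^2 := by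
    have heq : ∀ t : ℝ, |v t| ^ (2:ℝ) = (v t)^2 := fun t => by
      rw [Real.rpow_two, sq_abs]
    calc (∫ t : ℝ, |v t| ^ (2:ℝ) ∂μ) = ∫ t : ℝ, (v t)^2 ∂μ := by simp_rw [heq]
    _ ≤ ∫ t : ℝ, (v t)^2 := setIntegral_le_integral hsq
        (Filter.Eventually.of_forall fun t => sq_nonneg _)
  calc |∫ t in (0:ℝ)..s, v t| ≤ ∫ t, 1 * |v t| ∂μ := h2 ▸ h1
    _ ≤ (∫ _t : ℝ, (1:ℝ)^(2:ℝ) ∂μ) ^ ((1:ℝ)/2) * (∫ t : ℝ, |v t| ^ (2:ℝ) ∂μ) ^ ((1:ℝ)/2) := h3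
    _ ≤ |s| ^ ((1:ℝ)/2) * (∫ t : ℝ, (v t)^2) ^ ((1:ℝ)/2) := by
        rw [h4]
        gcongr

    _ = Real.sqrt |s| * Real.sqrt (∫ t : ℝ, (v t)^2) := by
        rw [Real.sqrt_eq_rpow, Real.sqrt_eq_rpow]

lemma memL2_intervalIntegrable (v : ℝ → ℝ) (hv : MemLp v 2 volume) (a b : ℝ) :
    IntervalIntegrable v volume a b := by
  rw [intervalIntegrable_iff]
  haveI : IsFiniteMeasure (volume.restrict (Set.uIoc a b)) := by
    constructor
    rw [Measure.restrict_apply_univ]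
    rcases le_total a b with h | h
    · rw [Set.uIoc_of_le h]; exact measure_Ioc_lt_top
    · rw [Set.uIoc_of_ge h]; exact measure_Ioc_lt_top
  have h2 : MemLp v 2 (volume.restrict (Set.uIoc a b)) := hv.restrict _
  exact (h2.mono_exponent (by norm_num)).integrable le_rfl

lemma D12_zero_le (φ v : ℝ → ℝ) : |φ 0| ≤ D12norm φ v ∧ Real.sqrt (∫ t : ℝ, (v t)^2) ≤ D12norm φ v := by
  have hnn : 0 ≤ ∫ t : ℝ, (v t)^2 := integral_nonneg fun t => sq_nonneg _
  constructor
  · rw [← Real.sqrt_sq_eq_abs (φ 0)]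
    exact Real.sqrt_le_sqrt (by nlinarith)
  · exact Real.sqrt_le_sqrt (by nlinarith [sq_nonneg (φ 0)])

lemma pointwise_bound (φ v : ℝ → ℝ) (hv : MemLp v 2 volume)
    (hrep : ∀ s, φ s = φ 0 + ∫ t in (0:ℝ)..s, v t) (s : ℝ) :
    |φ s| ≤ D12norm φ v * (1 + Real.sqrt |s|) := by
  obtain ⟨h0, h1⟩ := D12_zero_le φ v
  have := cs_bound v hv s
  have hs : 0 ≤ Real.sqrt |s| := Real.sqrt_nonneg _
  calc |φ s| ≤ |φ 0| + |∫ t in (0:ℝ)..s, v t| := by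
        rw [hrep s]; exact abs_add_le _ _
    _ ≤ D12norm φ v + Real.sqrt |s| * D12norm φ v := by
        refine add_le_add h0 (this.trans ?_)
        exact mul_le_mul_of_nonneg_left h1 hs
    _ = D12norm φ v * (1 + Real.sqrt |s|) := by ring

lemma diff_rep (φ vφ ψ vψ : ℝ → ℝ) (hφ : IsD12 φ vφ) (hψ : IsD12 ψ vψ) (s : ℝ) :
    ψ s - φ s = (ψ 0 - φ 0) + ∫ t in (0:ℝ)..s, (vψ t - vφ t) := by
  rw [intervalIntegral.integral_sub (memL2_intervalIntegrable vψ hψ.2.1 0 s)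
    (memL2_intervalIntegrable vφ hφ.2.1 0 s), hφ.2.2 s, hψ.2.2 s]
  ring

lemma eps_bound (c K : ℝ) (hc : 0 < c) (hK : 0 < K) :
    ∃ ε : ℝ, 0 < ε ∧ ∀ s x : ℝ,
      c * (1+|s|) ^ ((2:ℝ)/3) - K * (1 + Real.sqrt |s|) ≤ x →
      ε * (1+|s|) ^ ((4:ℝ)/3) ≤ 1 + x^2 := by
  set A : ℝ := max 1 ((4*K/c)^8) with hA
  have hA1 : 1 ≤ A := le_max_left _ _
  have hA0 : 0 < A := lt_of_lt_of_le one_pos hA1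
  refine ⟨min (c^2/4) (1/A), lt_min (by positivity) (by positivity), fun s x hx => ?_⟩
  set y : ℝ := (1+|s|) ^ ((1:ℝ)/6) with hy
  have hb0 : (0:ℝ) ≤ 1 + |s| := by positivity
  have hy1 : 1 ≤ y := Real.one_le_rpow (by linarith [abs_nonneg s]) (by norm_num)
  have hy0 : 0 < y := lt_of_lt_of_le one_pos hy1
  have h23 : (1+|s|) ^ ((2:ℝ)/3) = y^4 := by
    rw [hy, ← Real.rpow_natCast ((1+|s|) ^ ((1:ℝ)/6)) 4, ← Real.rpow_mul hb0]
    norm_num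
  have h43 : (1+|s|) ^ ((4:ℝ)/3) = y^8 := by
    rw [hy, ← Real.rpow_natCast ((1+|s|) ^ ((1:ℝ)/6)) 8, ← Real.rpow_mul hb0]
    norm_num
  have h12 : Real.sqrt |s| ≤ y^3 := by
    have h1 : Real.sqrt |s| ≤ Real.sqrt (1+|s|) := Real.sqrt_le_sqrt (by linarith [abs_nonneg s])
    have h2 : Real.sqrt (1+|s|) = y^3 := by
      rw [Real.sqrt_eq_rpow, hy, ← Real.rpow_natCast ((1+|s|) ^ ((1:ℝ)/6)) 3,
        ← Real.rpow_mul hb0]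
      norm_num
    linarith
  have hx' : c*y^4 - 2*K*y^3 ≤ x := by
    have h3 : 1 + Real.sqrt |s| ≤ 2*y^3 := by nlinarith [pow_le_pow_left₀ (le_of_lt one_pos) hy1 3]
    have : K * (1 + Real.sqrt |s|) ≤ K * (2*y^3) := mul_le_mul_of_nonneg_left h3 hK.le
    rw [h23] at hx
    linarith
  rw [h43]
  rcases le_or_gt (4*K) (c*y) with hcase | hcase
  · have h4 : (c/2)*y^4 ≤ x := by nlinarith [pow_pos hy0 3]
    have h5 : ((c/2)*y^4)^2 ≤ x^2 := by
      have hnn : 0 ≤ (c/2)*y^4 := by positivity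
      nlinarith
    nlinarith [min_le_left (c^2/4) (1/A), pow_nonneg hy0.le 8]
  · have hyA : y ≤ 4*K/c := by
      rw [le_div_iff₀ hc]; nlinarith
    have hy8 : y^8 ≤ A := le_trans (pow_le_pow_left₀ hy0.le hyA 8) (le_max_right _ _)
    have hε : min (c^2/4) (1/A) ≤ 1/A := min_le_right _ _
    have : min (c^2/4) (1/A) * y^8 ≤ (1/A) * A := by
      apply mul_le_mul hε hy8 (by positivity) (by positivity)
    rw [one_div, inv_mul_cancel₀ hA0.ne'] at this
    simp only [one_div] at this ⊢
    nlinarith [sq_nonneg x]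

lemma g_hasDeriv (x : ℝ) : HasDerivAt (fun x : ℝ => ((1+x^2)^2)⁻¹)
    (-(2*(1+x^2)*(2*x)) / (((1+x^2)^2)^2)) x := by
  have h1 : HasDerivAt (fun x : ℝ => 1+x^2) (2*x) x := by
    simpa using (hasDerivAt_pow 2 x).const_add 1
  have h2 : HasDerivAt (fun x : ℝ => (1+x^2)^2) (2*(1+x^2)*(2*x)) x := by
    have := h1.fun_pow 2
    simpa [mul_comm, mul_assoc, mul_left_comm] using this
  have h3 := h2.fun_inv (by positivity)
  simpa [neg_div] using h3

lemma g_deriv_bound (x : ℝ) :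
    |(-(2*(1+x^2)*(2*x)) / (((1+x^2)^2)^2))| ≤ 2 * ((1+x^2)^2)⁻¹ := by
  have ht : (0:ℝ) < 1+x^2 := by positivity
  have heq : (-(2*(1+x^2)*(2*x)) / (((1+x^2)^2)^2)) = -(4*x) / (1+x^2)^3 := by
    field_simp
    ring
  rw [heq, abs_div, abs_of_pos (by positivity : (0:ℝ) < (1+x^2)^3)]
  rw [div_le_iff₀ (by positivity)]
  have h4 : |(-(4*x))| = 4*|x| := by
    rw [abs_neg, abs_mul, abs_of_pos (by norm_num : (0:ℝ) < 4)]
  rw [h4]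
  have hre : 2*((1+x^2)^2)⁻¹*(1+x^2)^3 = 2*(1+x^2) := by
    field_simp
  rw [hre]
  nlinarith [sq_nonneg (|x| - 1), abs_nonneg x, sq_abs x]

lemma g_diff_bound (ℓ D a b : ℝ) (ha : ℓ ≤ a) (hb : ℓ ≤ b)
    (hD : ∀ x : ℝ, ℓ ≤ x → 2 * ((1+x^2)^2)⁻¹ ≤ D) :
    |((1+a^2)^2)⁻¹ - ((1+b^2)^2)⁻¹| ≤ D * |a - b| := by
  have key := Convex.norm_image_sub_le_of_norm_hasDerivWithin_le
    (f := fun x : ℝ => ((1+x^2)^2)⁻¹)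
    (f' := fun x : ℝ => -(2*(1+x^2)*(2*x)) / (((1+x^2)^2)^2))
    (s := Set.Ici ℓ) (C := D)
    (fun x _ => (g_hasDeriv x).hasDerivWithinAt)
    (fun x hx => by rw [Real.norm_eq_abs]; exact le_trans (g_deriv_bound x) (hD x hx))
    (convex_Ici ℓ) hb ha
  simpa [Real.norm_eq_abs] using key

lemma sqrt_one_add (s : ℝ) : 1 + Real.sqrt |s| ≤ 2 * (1+|s|) ^ ((1:ℝ)/2) := by
  have h1 : Real.sqrt |s| ≤ (1+|s|) ^ ((1:ℝ)/2) := by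
    rw [← Real.sqrt_eq_rpow]
    exact Real.sqrt_le_sqrt (by linarith [abs_nonneg s])
  have h2 : (1:ℝ) ≤ (1+|s|) ^ ((1:ℝ)/2) :=
    Real.one_le_rpow (by linarith [abs_nonneg s]) (by norm_num)
  linarith

lemma sq_bound_of_eps (ε t x : ℝ) (hε : 0 < ε) (ht : 0 < t)
    (h : ε * t ^ ((4:ℝ)/3) ≤ 1 + x^2) :
    ((1+x^2)^2)⁻¹ ≤ (ε^2)⁻¹ * (t ^ ((8:ℝ)/3))⁻¹ := by
  have hu : 0 < t ^ ((4:ℝ)/3) := Real.rpow_pos_of_pos ht _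
  have h8 : t ^ ((8:ℝ)/3) = (t ^ ((4:ℝ)/3))^2 := by
    rw [← Real.rpow_natCast (t ^ ((4:ℝ)/3)) 2, ← Real.rpow_mul ht.le]; norm_num
  have hx2 : (0:ℝ) < 1 + x^2 := by positivity
  have h2 : ε^2 * (t ^ ((4:ℝ)/3))^2 ≤ (1+x^2)^2 := by
    have key : 0 ≤ (1+x^2 - ε*t^((4:ℝ)/3)) * (1+x^2 + ε*t^((4:ℝ)/3)) :=
      mul_nonneg (by linarith) (by positivity)
    nlinarith [key]
  calc ((1+x^2)^2)⁻¹ ≤ (ε^2 * (t ^ ((4:ℝ)/3))^2)⁻¹ := by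
        apply inv_anti₀ (by positivity) h2
    _ = (ε^2)⁻¹ * (t ^ ((8:ℝ)/3))⁻¹ := by rw [h8, mul_inv]

lemma rpow_cancel (t p q : ℝ) (ht : 0 < t) : t ^ p * (t ^ (p+q))⁻¹ = (t ^ q)⁻¹ := by
  rw [Real.rpow_add ht, mul_inv, ← mul_assoc,
    mul_inv_cancel₀ (Real.rpow_pos_of_pos ht p).ne', one_mul]


set_option maxHeartbeats 2000000 in
theorem stmt10 (r0 : ℝ → ℝ) (c C : ℝ) (hc : 0 < c) (hC : 0 < C)
    (hr0c : Continuous r0)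
    (hlow : ∀ s : ℝ, c * (1 + |s|) ^ ((2 : ℝ) / 3) ≤ r0 s)
    (hup : ∀ s : ℝ, r0 s ≤ C * (1 + |s|) ^ ((2 : ℝ) / 3)) :
    ∀ K : ℝ, 0 < K → ∃ L : ℝ, 0 < L ∧
      ∀ φ vφ ψ vψ : ℝ → ℝ, IsD12 φ vφ → IsD12 ψ vψ →
        D12norm φ vφ ≤ K → D12norm ψ vψ ≤ K →
        |Bar r0 ψ - Bar r0 φ| ≤
          L * D12norm (fun s => ψ s - φ s) (fun s => vψ s - vφ s) := by
  intro K hK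
  obtain ⟨ε, hε, hεb⟩ := eps_bound c K hc hK
  have hI83 : Integrable (fun s : ℝ => ((1+|s|) ^ ((8:ℝ)/3))⁻¹) :=
    integrable_japanese (by norm_num)
  have hI53 : Integrable (fun s : ℝ => ((1+|s|) ^ ((5:ℝ)/3))⁻¹) :=
    integrable_japanese (by norm_num)
  have hI136 : Integrable (fun s : ℝ => ((1+|s|) ^ ((13:ℝ)/6))⁻¹) :=
    integrable_japanese (by norm_num)
  have hI76 : Integrable (fun s : ℝ => ((1+|s|) ^ ((7:ℝ)/6))⁻¹) :=
    integrable_japanese (by norm_num)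
  set I83 : ℝ := ∫ s : ℝ, ((1+|s|) ^ ((8:ℝ)/3))⁻¹ with hI83d
  set I53 : ℝ := ∫ s : ℝ, ((1+|s|) ^ ((5:ℝ)/3))⁻¹ with hI53d
  set I136 : ℝ := ∫ s : ℝ, ((1+|s|) ^ ((13:ℝ)/6))⁻¹ with hI136d
  set I76 : ℝ := ∫ s : ℝ, ((1+|s|) ^ ((7:ℝ)/6))⁻¹ with hI76d
  have hI83nn : 0 ≤ I83 := integral_nonneg fun s => by positivity
  have hI53nn : 0 ≤ I53 := integral_nonneg fun s => by positivity
  have hI136nn : 0 ≤ I136 := integral_nonneg fun s => by positivity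
  have hI76nn : 0 ≤ I76 := integral_nonneg fun s => by positivity
  set M : ℝ := 2*C + 2*K with hM
  have hMpos : 0 < M := by positivity
  set β : ℝ := ((1+M^2)^2)⁻¹ with hβ
  have hβpos : 0 < β := by positivity
  refine ⟨((4*(ε^2)⁻¹*I76) * ((ε^2)⁻¹*I83) + ((ε^2)⁻¹*I53) * (4*(ε^2)⁻¹*I136))/β^2 + 1,
    by positivity, ?_⟩
  intro φ vφ ψ vψ hφ hψ hφK hψK
  -- the core facts for a single admissible function
  have main : ∀ χ vχ : ℝ → ℝ, IsD12 χ vχ → D12norm χ vχ ≤ K →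
      (∀ s, c*(1+|s|) ^ ((2:ℝ)/3) - K*(1+Real.sqrt |s|) ≤ r0 s + χ s) ∧
      Integrable (fun s => ((1 + (r0 s + χ s)^2)^2)⁻¹) ∧
      Integrable (fun s => s * ((1 + (r0 s + χ s)^2)^2)⁻¹) ∧
      β ≤ (∫ s : ℝ, ((1 + (r0 s + χ s)^2)^2)⁻¹) ∧
      (∫ s : ℝ, ((1 + (r0 s + χ s)^2)^2)⁻¹) ≤ (ε^2)⁻¹ * I83 ∧
      |∫ s : ℝ, s * ((1 + (r0 s + χ s)^2)^2)⁻¹| ≤ (ε^2)⁻¹ * I53 := by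
    intro χ vχ hχ hχK
    have hcont : Continuous fun s => ((1 + (r0 s + χ s)^2)^2)⁻¹ := by
      apply Continuous.inv₀ ((continuous_const.add ((hr0c.add hχ.1).pow 2)).pow 2)
      intro s; exact (by positivity : (0:ℝ) < (1 + (r0 s + χ s)^2)^2).ne'
    have hpt : ∀ s, |χ s| ≤ K*(1+Real.sqrt |s|) := fun s =>
      (pointwise_bound χ vχ hχ.2.1 hχ.2.2 s).trans
        (mul_le_mul_of_nonneg_right hχK (by positivity))
    have hlb : ∀ s, c*(1+|s|) ^ ((2:ℝ)/3) - K*(1+Real.sqrt |s|) ≤ r0 s + χ s := fun s => by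
      have h1 := hlow s
      have h2 := (abs_le.1 (hpt s)).1
      linarith
    have hFb : ∀ s, ((1 + (r0 s + χ s)^2)^2)⁻¹ ≤ (ε^2)⁻¹ * ((1+|s|) ^ ((8:ℝ)/3))⁻¹ := fun s =>
      sq_bound_of_eps ε (1+|s|) _ hε (by positivity) (hεb s _ (hlb s))
    have hFnn : ∀ s, (0:ℝ) ≤ ((1 + (r0 s + χ s)^2)^2)⁻¹ := fun s => by positivity
    have hint1 : Integrable (fun s => ((1 + (r0 s + χ s)^2)^2)⁻¹) := by
      apply (hI83.const_mul ((ε^2)⁻¹)).mono' hcont.aestronglyMeasurable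
      refine Filter.Eventually.of_forall fun s => ?_
      rw [Real.norm_eq_abs, abs_of_nonneg (hFnn s)]
      exact hFb s
    have hsFb : ∀ s, |s * ((1 + (r0 s + χ s)^2)^2)⁻¹| ≤
        (ε^2)⁻¹ * ((1+|s|) ^ ((5:ℝ)/3))⁻¹ := fun s => by
      rw [abs_mul, abs_of_nonneg (hFnn s)]
      have hc1 : |s| * ((1 + (r0 s + χ s)^2)^2)⁻¹ ≤
          (1+|s|) * ((ε^2)⁻¹ * ((1+|s|) ^ ((8:ℝ)/3))⁻¹) :=
        mul_le_mul (by linarith [abs_nonneg s]) (hFb s) (hFnn s) (by positivity)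
      have hc2 : (1+|s|) * ((1+|s|) ^ ((8:ℝ)/3))⁻¹ = ((1+|s|) ^ ((5:ℝ)/3))⁻¹ := by
        have := rpow_cancel (1+|s|) 1 ((5:ℝ)/3) (by positivity)
        rw [Real.rpow_one] at this
        norm_num at this
        exact this
      calc |s| * ((1 + (r0 s + χ s)^2)^2)⁻¹ ≤
          (1+|s|) * ((ε^2)⁻¹ * ((1+|s|) ^ ((8:ℝ)/3))⁻¹) := hc1
        _ = (ε^2)⁻¹ * ((1+|s|) * ((1+|s|) ^ ((8:ℝ)/3))⁻¹) := by ring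
        _ = (ε^2)⁻¹ * ((1+|s|) ^ ((5:ℝ)/3))⁻¹ := by rw [hc2]
    have hint2 : Integrable (fun s => s * ((1 + (r0 s + χ s)^2)^2)⁻¹) := by
      apply (hI53.const_mul ((ε^2)⁻¹)).mono'
        ((continuous_id.mul hcont).aestronglyMeasurable)
      exact Filter.Eventually.of_forall fun s => by
        rw [Real.norm_eq_abs]; exact hsFb s
    have hB2 : |∫ s : ℝ, s * ((1 + (r0 s + χ s)^2)^2)⁻¹| ≤ (ε^2)⁻¹ * I53 := by
      have h := norm_integral_le_of_norm_le (hI53.const_mul ((ε^2)⁻¹))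
        (Filter.Eventually.of_forall fun s => by
          rw [Real.norm_eq_abs]; exact hsFb s)
      rw [Real.norm_eq_abs] at h
      rwa [MeasureTheory.integral_const_mul] at h
    have hB1up : (∫ s : ℝ, ((1 + (r0 s + χ s)^2)^2)⁻¹) ≤ (ε^2)⁻¹ * I83 := by
      calc (∫ s : ℝ, ((1 + (r0 s + χ s)^2)^2)⁻¹) ≤
          ∫ s : ℝ, (ε^2)⁻¹ * ((1+|s|) ^ ((8:ℝ)/3))⁻¹ :=
            integral_mono hint1 (hI83.const_mul _) hFb
        _ = (ε^2)⁻¹ * I83 := by rw [MeasureTheory.integral_const_mul]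
    have hB1lo : β ≤ ∫ s : ℝ, ((1 + (r0 s + χ s)^2)^2)⁻¹ := by
      have hMb : ∀ s ∈ Icc (0:ℝ) 1, β ≤ ((1 + (r0 s + χ s)^2)^2)⁻¹ := by
        intro s hs
        have habs : |s| ≤ 1 := abs_le.2 ⟨by linarith [hs.1], hs.2⟩
        have h23 : (1+|s|) ^ ((2:ℝ)/3) ≤ 2 := by
          calc (1+|s|) ^ ((2:ℝ)/3) ≤ (2:ℝ) ^ ((2:ℝ)/3) :=
              Real.rpow_le_rpow (by positivity) (by linarith) (by norm_num)
            _ ≤ (2:ℝ) ^ (1:ℝ) :=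
              Real.rpow_le_rpow_of_exponent_le (by norm_num) (by norm_num)
            _ = 2 := Real.rpow_one 2
        have hsq1 : Real.sqrt |s| ≤ 1 := by
          rw [show (1:ℝ) = Real.sqrt 1 by rw [Real.sqrt_one]]
          exact Real.sqrt_le_sqrt habs
        have hr0pos : 0 < r0 s := lt_of_lt_of_le (by positivity) (hlow s)
        have hupC : r0 s ≤ 2*C := by
          have := hup s
          nlinarith
        have hptx := abs_le.1 (hpt s)
        have hx : |r0 s + χ s| ≤ M := by
          rw [abs_le]
          constructor
          · nlinarith [hptx.1]
          · nlinarith [hptx.2]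
        have hx2 : (r0 s + χ s)^2 ≤ M^2 := by
          have := abs_le.1 hx
          nlinarith
        rw [hβ]
        apply inv_anti₀ (by positivity)
        nlinarith
      have h1 := setIntegral_ge_of_const_le (μ := volume) measurableSet_Icc
        (by rw [Real.volume_Icc]; exact ENNReal.ofReal_ne_top) hMb
        hint1.integrableOn
      have h2 := setIntegral_le_integral (s := Icc (0:ℝ) 1) hint1 (Filter.Eventually.of_forall fun s => hFnn s)
      have h3 : (volume (Icc (0:ℝ) 1)).toReal = 1 := by
        rw [Real.volume_Icc]
        norm_num
      rw [measureReal_def, h3, one_smul] at h1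
      exact le_trans h1 h2
    exact ⟨hlb, hint1, hint2, hB1lo, hB1up, hB2⟩
  obtain ⟨hlbφ, hint1φ, hint2φ, hloφ, hupφ, hB2φ⟩ := main φ vφ hφ hφK
  obtain ⟨hlbψ, hint1ψ, hint2ψ, hloψ, hupψ, hB2ψ⟩ := main ψ vψ hψ hψK
  -- difference estimates
  set δ : ℝ := D12norm (fun s => ψ s - φ s) (fun s => vψ s - vφ s) with hδd
  have hδ0 : 0 ≤ δ := Real.sqrt_nonneg _
  have hvd : MemLp (fun s => vψ s - vφ s) 2 volume := hψ.2.1.sub hφ.2.1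
  have hdrep : ∀ s : ℝ, (fun s => ψ s - φ s) s =
      (fun s => ψ s - φ s) 0 + ∫ t in (0:ℝ)..s, (vψ t - vφ t) := fun s => by
    simpa using diff_rep φ vφ ψ vψ hφ hψ s
  have hdpt : ∀ s, |ψ s - φ s| ≤ δ*(1+Real.sqrt |s|) := fun s => by
    simpa using pointwise_bound _ _ hvd hdrep s
  have hDB : ∀ s, |((1 + (r0 s + ψ s)^2)^2)⁻¹ - ((1 + (r0 s + φ s)^2)^2)⁻¹| ≤
      4*δ*(ε^2)⁻¹ * ((1+|s|) ^ ((13:ℝ)/6))⁻¹ := by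
    intro s
    have hg := g_diff_bound (c*(1+|s|) ^ ((2:ℝ)/3) - K*(1+Real.sqrt |s|))
      (2*((ε^2)⁻¹ * ((1+|s|) ^ ((8:ℝ)/3))⁻¹)) (r0 s + ψ s) (r0 s + φ s)
      (hlbψ s) (hlbφ s)
      (fun x hx => by
        have h := sq_bound_of_eps ε (1+|s|) x hε (by positivity) (hεb s x hx)
        linarith)
    have hab : (r0 s + ψ s) - (r0 s + φ s) = ψ s - φ s := by ring
    rw [hab] at hg
    have hstep : |ψ s - φ s| ≤ δ * (2*(1+|s|) ^ ((1:ℝ)/2)) := by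
      calc |ψ s - φ s| ≤ δ*(1+Real.sqrt |s|) := hdpt s
        _ ≤ δ * (2*(1+|s|) ^ ((1:ℝ)/2)) :=
          mul_le_mul_of_nonneg_left (sqrt_one_add s) hδ0
    have hc2 : (1+|s|) ^ ((1:ℝ)/2) * ((1+|s|) ^ ((8:ℝ)/3))⁻¹ =
        ((1+|s|) ^ ((13:ℝ)/6))⁻¹ := by
      have := rpow_cancel (1+|s|) ((1:ℝ)/2) ((13:ℝ)/6) (by positivity)
      norm_num at this ⊢
      exact this
    calc |((1 + (r0 s + ψ s)^2)^2)⁻¹ - ((1 + (r0 s + φ s)^2)^2)⁻¹| ≤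
        2*((ε^2)⁻¹ * ((1+|s|) ^ ((8:ℝ)/3))⁻¹) * |ψ s - φ s| := hg
      _ ≤ 2*((ε^2)⁻¹ * ((1+|s|) ^ ((8:ℝ)/3))⁻¹) * (δ * (2*(1+|s|) ^ ((1:ℝ)/2))) :=
          mul_le_mul_of_nonneg_left hstep (by positivity)
      _ = 4*δ*(ε^2)⁻¹ * ((1+|s|) ^ ((1:ℝ)/2) * ((1+|s|) ^ ((8:ℝ)/3))⁻¹) := by ring
      _ = 4*δ*(ε^2)⁻¹ * ((1+|s|) ^ ((13:ℝ)/6))⁻¹ := by rw [hc2]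
  have hDB2 : ∀ s : ℝ, |s * ((1 + (r0 s + ψ s)^2)^2)⁻¹ - s * ((1 + (r0 s + φ s)^2)^2)⁻¹| ≤
      4*δ*(ε^2)⁻¹ * ((1+|s|) ^ ((7:ℝ)/6))⁻¹ := by
    intro s
    have hc2 : (1+|s|) * ((1+|s|) ^ ((13:ℝ)/6))⁻¹ = ((1+|s|) ^ ((7:ℝ)/6))⁻¹ := by
      have := rpow_cancel (1+|s|) 1 ((7:ℝ)/6) (by positivity)
      rw [Real.rpow_one] at this
      norm_num at this ⊢
      exact this
    calc |s * ((1 + (r0 s + ψ s)^2)^2)⁻¹ - s * ((1 + (r0 s + φ s)^2)^2)⁻¹|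
        = |s| * |((1 + (r0 s + ψ s)^2)^2)⁻¹ - ((1 + (r0 s + φ s)^2)^2)⁻¹| := by
          rw [← abs_mul]; ring_nf
      _ ≤ (1+|s|) * (4*δ*(ε^2)⁻¹ * ((1+|s|) ^ ((13:ℝ)/6))⁻¹) :=
          mul_le_mul (by linarith [abs_nonneg s]) (hDB s) (abs_nonneg _) (by positivity)
      _ = 4*δ*(ε^2)⁻¹ * ((1+|s|) * ((1+|s|) ^ ((13:ℝ)/6))⁻¹) := by ring
      _ = 4*δ*(ε^2)⁻¹ * ((1+|s|) ^ ((7:ℝ)/6))⁻¹ := by rw [hc2]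
  have hΔ1 : |(∫ s : ℝ, ((1 + (r0 s + ψ s)^2)^2)⁻¹) -
      (∫ s : ℝ, ((1 + (r0 s + φ s)^2)^2)⁻¹)| ≤ 4*δ*(ε^2)⁻¹ * I136 := by
    rw [← integral_sub hint1ψ hint1φ]
    have h := norm_integral_le_of_norm_le (hI136.const_mul (4*δ*(ε^2)⁻¹))
      (Filter.Eventually.of_forall fun s => by
        rw [Real.norm_eq_abs]; exact hDB s)
    rw [Real.norm_eq_abs] at h
    rwa [MeasureTheory.integral_const_mul] at h
  have hΔ2 : |(∫ s : ℝ, s * ((1 + (r0 s + ψ s)^2)^2)⁻¹) -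
      (∫ s : ℝ, s * ((1 + (r0 s + φ s)^2)^2)⁻¹)| ≤ 4*δ*(ε^2)⁻¹ * I76 := by
    rw [← integral_sub hint2ψ hint2φ]
    have h := norm_integral_le_of_norm_le (hI76.const_mul (4*δ*(ε^2)⁻¹))
      (Filter.Eventually.of_forall fun s => by
        rw [Real.norm_eq_abs]; exact hDB2 s)
    rw [Real.norm_eq_abs] at h
    rwa [MeasureTheory.integral_const_mul] at h
  -- final algebra
  set B1φ : ℝ := ∫ s : ℝ, ((1 + (r0 s + φ s)^2)^2)⁻¹ with hB1φd
  set B1ψ : ℝ := ∫ s : ℝ, ((1 + (r0 s + ψ s)^2)^2)⁻¹ with hB1ψd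
  set B2φ : ℝ := ∫ s : ℝ, s * ((1 + (r0 s + φ s)^2)^2)⁻¹ with hB2φd
  set B2ψ : ℝ := ∫ s : ℝ, s * ((1 + (r0 s + ψ s)^2)^2)⁻¹ with hB2ψd
  have hB1φpos : 0 < B1φ := lt_of_lt_of_le hβpos hloφ
  have hB1ψpos : 0 < B1ψ := lt_of_lt_of_le hβpos hloψ
  have hBar : Bar r0 ψ - Bar r0 φ = B2ψ/B1ψ - B2φ/B1φ := rfl
  rw [hBar]
  have heq : B2ψ/B1ψ - B2φ/B1φ =
      ((B2ψ - B2φ)*B1φ + B2φ*(B1φ - B1ψ))/(B1ψ*B1φ) := by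
    field_simp
    ring
  rw [heq, abs_div, abs_of_pos (mul_pos hB1ψpos hB1φpos)]
  have hnum : |(B2ψ - B2φ)*B1φ + B2φ*(B1φ - B1ψ)| ≤
      (4*δ*(ε^2)⁻¹*I76) * ((ε^2)⁻¹*I83) + ((ε^2)⁻¹*I53) * (4*δ*(ε^2)⁻¹*I136) := by
    calc |(B2ψ - B2φ)*B1φ + B2φ*(B1φ - B1ψ)| ≤
        |(B2ψ - B2φ)*B1φ| + |B2φ*(B1φ - B1ψ)| := abs_add_le _ _
      _ = |B2ψ - B2φ| * |B1φ| + |B2φ| * |B1φ - B1ψ| := by rw [abs_mul, abs_mul]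
      _ ≤ (4*δ*(ε^2)⁻¹*I76) * ((ε^2)⁻¹*I83) + ((ε^2)⁻¹*I53) * (4*δ*(ε^2)⁻¹*I136) := by
          apply add_le_add
          · apply mul_le_mul hΔ2 _ (abs_nonneg _) (by positivity)
            rw [abs_of_pos hB1φpos]
            exact hupφ
          · apply mul_le_mul hB2φ _ (abs_nonneg _) (by positivity)
            rw [abs_sub_comm]
            exact hΔ1
  have hden : β^2 ≤ B1ψ*B1φ := by nlinarith
  calc |(B2ψ - B2φ)*B1φ + B2φ*(B1φ - B1ψ)| / (B1ψ*B1φ) ≤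
      ((4*δ*(ε^2)⁻¹*I76) * ((ε^2)⁻¹*I83) + ((ε^2)⁻¹*I53) * (4*δ*(ε^2)⁻¹*I136)) / β^2 :=
        div_le_div₀ (by positivity) hnum (by positivity) hden
    _ = (((4*(ε^2)⁻¹*I76) * ((ε^2)⁻¹*I83) + ((ε^2)⁻¹*I53) * (4*(ε^2)⁻¹*I136))/β^2) * δ := by
        ring
    _ ≤ (((4*(ε^2)⁻¹*I76) * ((ε^2)⁻¹*I83) + ((ε^2)⁻¹*I53) * (4*(ε^2)⁻¹*I136))/β^2 + 1) * δ := by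
        apply mul_le_mul_of_nonneg_right _ hδ0
        linarith
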